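/- arXiv:1604.01713 — 4 statements merged into one kernel-verified Lean document; each statement's English description precedes it below -/
import Mathlib

section
/- Let A ∈ ℂ^{n×n}, let 𝒰 be a subspace of ℂⁿ, let 𝒞 = A(𝒰) be its image under A, and let P : ℂⁿ → ℂⁿ be the orthogonal projection onto 𝒞. Let p, m ≥ 1, and for each i = 1,…,p let b^(i), x̂₀^(i) ∈ ℂⁿ with residual r̂^(i) = b^(i) − A x̂₀^(i), and let R̂ ∈ ℂ^{n×p} be the matrix whose i-th column is r̂^(i). Then max over i = 1,…,p of the infimum over s ∈ 𝒰 and t ∈ 𝕂_m((I − P)A, R̂) of ‖b^(i) − A(x̂₀^(i) + t + s)‖₂ is less than or equal to max over i = 1,…,p of the infimum over s ∈ 𝒰 and t ∈ K_m((I − P)A, r̂^(i)) of ‖b^(i) − A(x̂₀^(i) + t + s)‖₂. -/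
open scoped Matrix BigOperators

/-- Euclidean 2-norm of a vector in ℂ^d. -/
noncomputable def cenorm {d : ℕ} (v : Fin d → ℂ) : ℝ :=
  Real.sqrt (∑ i, ‖v i‖ ^ 2)

/-- The standard (conjugate-linear in the first argument) inner product on ℂ^d. -/
noncomputable def cinner {d : ℕ} (v w : Fin d → ℂ) : ℂ :=
  ∑ i, star (v i) * w i

/-- The Krylov subspace K_m(f, u) = span{u, f u, …, f^{m-1} u} of a linear
operator f. -/
noncomputable def krylovE {n : ℕ} (f : (Fin n → ℂ) →ₗ[ℂ] (Fin n → ℂ))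
    (u : Fin n → ℂ) (m : ℕ) : Submodule ℂ (Fin n → ℂ) :=
  Submodule.span ℂ {v | ∃ j < m, v = (f ^ j) u}

/-- The block Krylov subspace 𝕂_m(f, R) of a linear operator f: the span of the
images under f^j, j = 0, …, m-1, of all columns of R. -/
noncomputable def blockKrylovE {n p : ℕ} (f : (Fin n → ℂ) →ₗ[ℂ] (Fin n → ℂ))
    (R : Matrix (Fin n) (Fin p) ℂ) (m : ℕ) : Submodule ℂ (Fin n → ℂ) :=
  Submodule.span ℂ {v | ∃ j < m, ∃ i : Fin p, v = (f ^ j) (Rᵀ i)}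

set_option maxHeartbeats 1000000 in
/-- The worst-case (over right-hand sides) minimal residual norm of block
recycled GMRES over 𝒰 + 𝕂_m((I-P)A, R̂) is at most the worst-case minimal
residual norm of single-vector recycled GMRES over 𝒰 + K_m((I-P)A, r̂⁽ⁱ⁾). -/
theorem block_recycled_gmres_max_residual_le {n p m : ℕ} (hp : 1 ≤ p) (hm : 1 ≤ m)
    (A : Matrix (Fin n) (Fin n) ℂ)
    (U : Submodule ℂ (Fin n → ℂ))
    (P : (Fin n → ℂ) →ₗ[ℂ] (Fin n → ℂ))
    (hPmem : ∀ v : Fin n → ℂ, P v ∈ U.map A.mulVecLin)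
    (hPorth : ∀ v : Fin n → ℂ, ∀ c ∈ U.map A.mulVecLin, cinner (v - P v) c = 0)
    (b x₀ : Fin p → (Fin n → ℂ))
    (R : Matrix (Fin n) (Fin p) ℂ)
    (hR : ∀ i : Fin p, Rᵀ i = b i - A.mulVec (x₀ i)) :
    (⨆ i : Fin p, ⨅ s : U,
        ⨅ t : blockKrylovE ((LinearMap.id - P) ∘ₗ A.mulVecLin) R m,
          cenorm (b i - A.mulVec (x₀ i + (t : Fin n → ℂ) + (s : Fin n → ℂ)))) ≤
      ⨆ i : Fin p, ⨅ s : U,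
        ⨅ t : krylovE ((LinearMap.id - P) ∘ₗ A.mulVecLin) (b i - A.mulVec (x₀ i)) m,
          cenorm (b i - A.mulVec (x₀ i + (t : Fin n → ℂ) + (s : Fin n → ℂ))) := by
  have henorm : ∀ (v : Fin n → ℂ), 0 ≤ cenorm v := fun v => Real.sqrt_nonneg _
  have hsub : ∀ i : Fin p,
      krylovE ((LinearMap.id - P) ∘ₗ A.mulVecLin) (b i - A.mulVec (x₀ i)) m ≤
      blockKrylovE ((LinearMap.id - P) ∘ₗ A.mulVecLin) R m := by
    intro i
    apply Submodule.span_mono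
    rintro v ⟨j, hj, rfl⟩
    exact ⟨j, hj, i, by rw [hR i]⟩
  apply ciSup_mono
  · exact (Set.finite_range _).bddAbove
  intro i
  apply ciInf_mono
  · exact ⟨0, by rintro x ⟨s, rfl⟩; exact le_ciInf fun t => henorm _⟩
  intro s
  refine le_ciInf fun t => ?_
  have hbdd : BddBelow (Set.range fun t' : blockKrylovE ((LinearMap.id - P) ∘ₗ A.mulVecLin) R m =>
      cenorm (b i - A.mulVec (x₀ i + (t' : Fin n → ℂ) + (s : Fin n → ℂ)))) :=
    ⟨0, by rintro x ⟨t', rfl⟩; exact henorm _⟩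
  have := ciInf_le hbdd (⟨(t : Fin n → ℂ), hsub i t.2⟩ :
    blockKrylovE ((LinearMap.id - P) ∘ₗ A.mulVecLin) R m)
  exact this
end

section
/- Let A ∈ ℂ^{n×n}, let U ∈ ℂ^{n×k}, and set C = A U; assume C has orthonormal columns (C*C = I_k). Let W_m ∈ ℂ^{n×mp}, W_{m+1} ∈ ℂ^{n×(m+1)p}, and H̄_m ∈ ℂ^{(m+1)p×mp} satisfy the projected block Arnoldi relation (I − C C*) A W_m = W_{m+1} H̄_m, and assume the columns of W_{m+1} are orthogonal to the columns of C, i.e. C* W_{m+1} = 0. Set F_m = C* A W_m ∈ ℂ^{k×mp}. Then the block matrix identity A [U W_m] = [C W_{m+1}] · [[I_k, F_m],[0, H̄_m]] holds, where [U W_m] and [C W_{m+1}] denote horizontal concatenations and [[I_k, F_m],[0, H̄_m]] is the indicated 2×2 block matrix. -/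
open scoped Matrix

/-- The block Arnoldi-like relation of recycled block GMRES:
A [U  W_m] = [C  W_{m+1}] [[I, F_m],[0, H̄_m]], where C = AU has orthonormal
columns, the projected block Arnoldi relation (I - C C*) A W_m = W_{m+1} H̄_m
holds, the columns of W_{m+1} are orthogonal to those of C, and
F_m = C* A W_m. -/
theorem recycled_block_arnoldi_relation {n k m p : ℕ}
    (A : Matrix (Fin n) (Fin n) ℂ) (U : Matrix (Fin n) (Fin k) ℂ)
    (C : Matrix (Fin n) (Fin k) ℂ) (hC : C = A * U)
    (hCorth : Cᴴ * C = 1)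
    (Wm : Matrix (Fin n) (Fin (m * p)) ℂ)
    (Wm1 : Matrix (Fin n) (Fin (m * p + p)) ℂ)
    (Hbar : Matrix (Fin (m * p + p)) (Fin (m * p)) ℂ)
    (hArnoldi : (1 - C * Cᴴ) * A * Wm = Wm1 * Hbar)
    (hOrth : Cᴴ * Wm1 = 0)
    (F : Matrix (Fin k) (Fin (m * p)) ℂ) (hF : F = Cᴴ * (A * Wm)) :
    A * Matrix.fromCols U Wm =
      Matrix.fromCols C Wm1 * Matrix.fromBlocks 1 F 0 Hbar := by
  have key : A * Wm = C * F + Wm1 * Hbar := by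
    rw [← hArnoldi, hF]
    rw [Matrix.sub_mul, Matrix.sub_mul, one_mul]
    simp only [Matrix.mul_assoc]
    noncomm_ring
  rw [Matrix.mul_fromCols, Matrix.fromCols_mul_fromBlocks, ← hC, key,
    Matrix.mul_one, Matrix.mul_zero, add_zero]
end

section
/- Let A ∈ ℂ^{n×n}, let U ∈ ℂ^{n×k}, and set C = A U; assume C has orthonormal columns (C*C = I_k). Let V_{m+1} ∈ ℂ^{n×(m+1)} have orthonormal columns with C* V_{m+1} = 0, let V_m consist of its first m columns, and let H̄_m ∈ ℂ^{(m+1)×m} satisfy (I − C C*) A V_m = V_{m+1} H̄_m. Set F_m = C* A V_m ∈ ℂ^{k×m}. Let b, x̂₀ ∈ ℂⁿ satisfy b − A x̂₀ = β V_{m+1} e₁ for some β ∈ ℝ, where e₁ is the first standard basis vector of ℂ^{m+1}. Then for every y ∈ ℂ^m, ‖b − A(x̂₀ + V_m y − U F_m y)‖₂ = ‖β e₁ − H̄_m y‖₂. Consequently, minimizing the recycled GMRES residual over corrections of the form V_m y − U F_m y is equivalent to solving the GMRES least-squares problem min over y of ‖β e₁ − H̄_m y‖₂. -/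
open scoped Matrix BigOperators

/-- Euclidean 2-norm of a vector in ℂ^d. -/
noncomputable def enorm2 {d : ℕ} (v : Fin d → ℂ) : ℝ :=
  Real.sqrt (∑ i, ‖v i‖ ^ 2)

lemma sum_sq_eq_re_dot {d : ℕ} (w : Fin d → ℂ) :
    ∑ i, ‖w i‖ ^ 2 = (dotProduct (star w) w).re := by
  rw [dotProduct, Complex.re_sum]
  refine Finset.sum_congr rfl fun i _ => ?_
  simp only [Pi.star_apply, RCLike.star_def]
  rw [mul_comm, Complex.mul_conj]
  simp [Complex.sq_norm]

lemma enorm_mulVec {n d : ℕ} (V : Matrix (Fin n) (Fin d) ℂ)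
    (h : Vᴴ * V = 1) (z : Fin d → ℂ) : enorm2 (V.mulVec z) = enorm2 z := by
  unfold enorm2
  congr 1
  rw [sum_sq_eq_re_dot, sum_sq_eq_re_dot]
  congr 1
  rw [Matrix.star_mulVec, Matrix.dotProduct_mulVec, Matrix.vecMul_vecMul, ← Matrix.dotProduct_mulVec]
  simp [h, Matrix.mulVec_one]

/-- For recycled GMRES, the residual norm of the full problem for the
correction V_m y - U F_m y equals the reduced least-squares residual norm
‖β e₁ - H̄_m y‖₂, so minimizing the recycled GMRES residual is equivalent to
the GMRES least-squares problem. -/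
theorem recycled_gmres_least_squares {n k m : ℕ}
    (A : Matrix (Fin n) (Fin n) ℂ) (U : Matrix (Fin n) (Fin k) ℂ)
    (C : Matrix (Fin n) (Fin k) ℂ) (hC : C = A * U)
    (hCorth : Cᴴ * C = 1)
    (V : Matrix (Fin n) (Fin (m + 1)) ℂ)
    (hVorth : Vᴴ * V = 1) (hCV : Cᴴ * V = 0)
    (Hbar : Matrix (Fin (m + 1)) (Fin m) ℂ)
    (hArnoldi : (1 - C * Cᴴ) * A * V.submatrix id Fin.castSucc = V * Hbar)
    (F : Matrix (Fin k) (Fin m) ℂ)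
    (hF : F = Cᴴ * (A * V.submatrix id Fin.castSucc))
    (b x₀ : Fin n → ℂ) (β : ℝ)
    (hres : b - A.mulVec x₀ = (β : ℂ) • V.mulVec (Pi.single 0 1)) :
    ∀ y : Fin m → ℂ,
      enorm2 (b - A.mulVec
          (x₀ + (V.submatrix id Fin.castSucc).mulVec y - U.mulVec (F.mulVec y))) =
        enorm2 ((β : ℂ) • (Pi.single (0 : Fin (m + 1)) (1 : ℂ) : Fin (m + 1) → ℂ) - Hbar.mulVec y) := by
  intro y
  set Vm := V.submatrix id Fin.castSucc with hVm
  have h1 : A * Vm - C * Cᴴ * (A * Vm) = V * Hbar := by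
    rw [← hArnoldi]; simp only [Matrix.sub_mul, Matrix.one_mul, Matrix.mul_assoc]
  have hkey : A * Vm = V * Hbar + C * F := by
    rw [hF, ← Matrix.mul_assoc, ← h1]; abel
  have hAVm : A.mulVec (Vm.mulVec y) = V.mulVec (Hbar.mulVec y) + C.mulVec (F.mulVec y) := by
    rw [Matrix.mulVec_mulVec, hkey, Matrix.add_mulVec, ← Matrix.mulVec_mulVec, ← Matrix.mulVec_mulVec]
  have hAU : A.mulVec (U.mulVec (F.mulVec y)) = C.mulVec (F.mulVec y) := by
    rw [hC, ← Matrix.mulVec_mulVec]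
  have hvec : b - A.mulVec (x₀ + Vm.mulVec y - U.mulVec (F.mulVec y)) =
      V.mulVec ((β : ℂ) • (Pi.single (0 : Fin (m + 1)) (1 : ℂ) : Fin (m + 1) → ℂ) - Hbar.mulVec y) := by
    rw [Matrix.mulVec_sub, Matrix.mulVec_add, hAVm, hAU, Matrix.mulVec_sub, Matrix.mulVec_smul]
    have hres' : b = (β : ℂ) • V.mulVec (Pi.single 0 1) + A.mulVec x₀ := by
      rw [← hres]; abel
    rw [hres']; abel
  rw [hvec, enorm_mulVec V hVorth]
end

section
/- Let A ∈ ℂ^{n×n}, let U ∈ ℂ^{n×k}, and set C = A U; assume C has orthonormal columns (C*C = I_k). Define P = C C* and Q = U C* A. Let 𝒦 be a subspace of ℂⁿ, let b, x̂₀ ∈ ℂⁿ with r̂₀ = b − A x̂₀ satisfying C* r̂₀ = 0, and suppose t̂ ∈ 𝒦 minimizes ‖r̂₀ − (I − P) A t‖₂ over t ∈ 𝒦. Then the approximation x = x̂₀ + t̂ − Q t̂ satisfies the minimum residual Petrov–Galerkin condition: b − A x is orthogonal to A(u + s) for every u in the column span of U and every s ∈ 𝒦, i.e., b − A x ⊥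 A(𝒰 + 𝒦) where 𝒰 is the column span of U. -/
open scoped Matrix BigOperators

/-- Euclidean 2-norm of a vector in ℂ^d. -/
noncomputable def enorm {d : ℕ} (v : Fin d → ℂ) : ℝ :=
  Real.sqrt (∑ i, ‖v i‖ ^ 2)

open scoped InnerProductSpace

lemma min_orth {E : Type*} [NormedAddCommGroup E] [InnerProductSpace ℂ E]
    (M : Submodule ℂ E) (u v : E) (hv : v ∈ M)
    (h : ∀ w ∈ M, ‖u - v‖ ≤ ‖u - w‖) : ∀ w ∈ M, ⟪u - v, w⟫_ℂ = 0 := by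
  rw [← Submodule.norm_eq_iInf_iff_inner_eq_zero M hv]
  refine le_antisymm (le_ciInf fun w => h w w.2) ?_
  exact ciInf_le ⟨0, by rintro x ⟨w, rfl⟩; positivity⟩ (⟨v, hv⟩ : M)

lemma cinner_dot {d : ℕ} (v : Fin d → ℂ) (w : Fin d → ℂ) : cinner v w = star v ⬝ᵥ w := by
  simp [cinner, dotProduct]

lemma cinner_mulVec {d k : ℕ} (v : Fin d → ℂ) (M : Matrix (Fin d) (Fin k) ℂ) (w : Fin k → ℂ) :
    cinner v (M.mulVec w) = cinner (Mᴴ.mulVec v) w := by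
  rw [cinner_dot, cinner_dot, Matrix.dotProduct_mulVec]
  congr 1
  rw [Matrix.star_mulVec, Matrix.conjTranspose_conjTranspose]

lemma cinner_add_right {d : ℕ} (v w1 w2 : Fin d → ℂ) :
    cinner v (w1 + w2) = cinner v w1 + cinner v w2 := by
  simp [cinner, mul_add, Finset.sum_add_distrib]

lemma cinner_zero_left {d : ℕ} (w : Fin d → ℂ) : cinner 0 w = 0 := by simp [cinner]

lemma enorm_eq {d : ℕ} (v : Fin d → ℂ) :
    _root_.enorm v = ‖((WithLp.linearEquiv 2 ℂ (Fin d → ℂ)).symm v : EuclideanSpace ℂ (Fin d))‖ := by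
  simp [_root_.enorm, EuclideanSpace.norm_eq, WithLp.linearEquiv]

lemma inner_euclid {d : ℕ} (a b : Fin d → ℂ) :
    ⟪((WithLp.linearEquiv 2 ℂ (Fin d → ℂ)).symm a : EuclideanSpace ℂ (Fin d)),
      ((WithLp.linearEquiv 2 ℂ (Fin d → ℂ)).symm b : EuclideanSpace ℂ (Fin d))⟫_ℂ
    = cinner a b := by
  simp [cinner, PiLp.inner_apply, RCLike.inner_apply, WithLp.linearEquiv]
  exact Finset.sum_congr rfl fun _ _ => mul_comm _ _

/-- If t̂ ∈ 𝒦 minimizes the projected residual ‖r̂₀ - (I - C C*) A t‖₂ over 𝒦,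
then the recycled GMRES approximation x = x̂₀ + t̂ - Q t̂ (with Q = U C* A)
satisfies the minimum-residual Petrov–Galerkin condition
b - A x ⊥ A(𝒰 + 𝒦), where 𝒰 is the column span of U. -/
theorem recycled_gmres_petrov_galerkin {n k : ℕ}
    (A : Matrix (Fin n) (Fin n) ℂ) (U : Matrix (Fin n) (Fin k) ℂ)
    (C : Matrix (Fin n) (Fin k) ℂ) (hC : C = A * U)
    (hCorth : Cᴴ * C = 1)
    (K : Submodule ℂ (Fin n → ℂ))
    (b x₀ : Fin n → ℂ)
    (hr₀ : Cᴴ.mulVec (b - A.mulVec x₀) = 0)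
    (th : Fin n → ℂ) (hth : th ∈ K)
    (hmin : ∀ t ∈ K,
      _root_.enorm ((b - A.mulVec x₀) - ((1 - C * Cᴴ) * A).mulVec th) ≤
        _root_.enorm ((b - A.mulVec x₀) - ((1 - C * Cᴴ) * A).mulVec t)) :
    ∀ u ∈ LinearMap.range U.mulVecLin, ∀ s ∈ K,
      cinner (b - A.mulVec (x₀ + th - (U * (Cᴴ * A)).mulVec th))
        (A.mulVec (u + s)) = 0 := by
  rintro u ⟨y, rfl⟩ s hs
  set r₀ := b - A.mulVec x₀ with hr0def
  set P1 : Matrix (Fin n) (Fin n) ℂ := 1 - C * Cᴴ with hP1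
  have hres : b - A.mulVec (x₀ + th - (U * (Cᴴ * A)).mulVec th)
      = r₀ - (P1 * A).mulVec th := by
    have h1 : A * (U * (Cᴴ * A)) = C * Cᴴ * A := by
      rw [hC]; simp [Matrix.mul_assoc]
    simp only [Matrix.mulVec_add, Matrix.mulVec_sub, hP1, Matrix.sub_mul,
      Matrix.one_mul, Matrix.sub_mulVec, Matrix.mulVec_mulVec, h1, hr0def]
    abel
  rw [hres]
  set res := r₀ - (P1 * A).mulVec th with hresd
  have h0 : Cᴴ * (P1 * A) = 0 := by
    rw [← Matrix.mul_assoc, hP1, Matrix.mul_sub, Matrix.mul_one, ← Matrix.mul_assoc,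
      hCorth, Matrix.one_mul, sub_self, Matrix.zero_mul]
  have hCres : Cᴴ.mulVec res = 0 := by
    rw [hresd, Matrix.mulVec_sub, hr₀, Matrix.mulVec_mulVec, h0,
      Matrix.zero_mulVec, sub_zero]
  have hCz : ∀ z : Fin k → ℂ, cinner res (C.mulVec z) = 0 := fun z => by
    rw [cinner_mulVec, hCres, cinner_zero_left]
  -- minimization ⟹ orthogonality to (P1*A) K
  set lE := (WithLp.linearEquiv 2 ℂ (Fin n → ℂ)).symm with hlE
  set L : (Fin n → ℂ) →ₗ[ℂ] EuclideanSpace ℂ (Fin n) :=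
    lE.toLinearMap ∘ₗ (P1 * A).mulVecLin with hL
  have hLapp : ∀ t, L t = lE ((P1 * A).mulVec t) := fun t => rfl
  have hbound : ∀ w ∈ K.map L, ‖lE r₀ - L th‖ ≤ ‖lE r₀ - w‖ := by
    rintro w ⟨t, ht, rfl⟩
    rw [hLapp, hLapp, ← map_sub, ← map_sub, ← enorm_eq, ← enorm_eq]
    exact hmin t ht
  have t1 : ∀ t ∈ K, cinner res ((P1 * A).mulVec t) = 0 := fun t ht => by
    have h := min_orth (K.map L) (lE r₀) (L th) ⟨th, hth, rfl⟩ hbound (L t) ⟨t, ht, rfl⟩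
    rw [hLapp, hLapp, ← map_sub, inner_euclid] at h
    exact h
  have hAs : A.mulVec s = (P1 * A).mulVec s + C.mulVec ((Cᴴ * A).mulVec s) := by
    rw [Matrix.mulVec_mulVec, ← Matrix.add_mulVec]
    congr 1
    rw [hP1, Matrix.sub_mul, Matrix.one_mul, Matrix.mul_assoc, sub_add_cancel]
  have hAu : A.mulVec (U.mulVecLin y) = C.mulVec y := by
    rw [Matrix.mulVecLin_apply, Matrix.mulVec_mulVec, ← hC]
  rw [Matrix.mulVec_add, cinner_add_right, hAu, hCz, hAs, cinner_add_right, t1 s hs, hCz]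
  ring
end
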